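/- arXiv:0810.1670 — 4 statements merged into one kernel-verified Lean document; each statement's English description precedes it below -/
import Mathlib

section
/- For a flow φ on a metric space X, if p is chain recurrent (for every continuous ε : X → (0,∞) and T > 0 there is an (ε,T)-chain from p to p), then for every s ≥ 0 the point φ(s,p) is chain reachable from p: for every continuous ε : X → (0,∞) and every T > 0 there exists an (ε,T)-chain from p to φ(s,p). -/
/-- An `(ε,T)`-chain for the flow `φ` from `p` to `q`: a finite sequence
`x 0 = p, …, x n = q` (with `n ≥ 1`) and times `t i ≥ T` such that
`dist (φ (t i) (x i)) (x (i+1)) < ε (φ (t i) (x i))` for all `i < n`. -/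
def EpsChain {X : Type*} [MetricSpace X] (φ : ℝ → X → X) (ε : X → ℝ) (T : ℝ)
    (p q : X) : Prop :=
  ∃ (n : ℕ) (x : ℕ → X) (t : ℕ → ℝ), 1 ≤ n ∧ x 0 = p ∧ x n = q ∧
    (∀ i < n, T ≤ t i) ∧
    ∀ i < n, dist (φ (t i) (x i)) (x (i + 1)) < ε (φ (t i) (x i))

theorem chain_reachable_of_chain_recurrent
    {X : Type*} [MetricSpace X] (φ : ℝ → X → X)
    (hφ0 : ∀ x, φ 0 x = x)
    (hφadd : ∀ t s x, φ (t + s) x = φ t (φ s x))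
    (hφcont : Continuous fun q : ℝ × X => φ q.1 q.2)
    (p : X)
    (hrec : ∀ ε : X → ℝ, Continuous ε → (∀ x, 0 < ε x) →
      ∀ T : ℝ, 0 < T → EpsChain φ ε T p p) :
    ∀ s : ℝ, 0 ≤ s →
      ∀ ε : X → ℝ, Continuous ε → (∀ x, 0 < ε x) →
        ∀ T : ℝ, 0 < T → EpsChain φ ε T p (φ s p) := by
  intro s hs ε hεc hεpos T hT
  have hφs : Continuous fun z : X => φ s z :=
    hφcont.comp (Continuous.prodMk_right s)
  have hcpos : 0 < ε (φ s p) := hεpos _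
  have hcont : Continuous fun z : X => ε (φ s z) - dist (φ s z) (φ s p) :=
    (hεc.comp hφs).sub (hφs.dist continuous_const)
  obtain ⟨δ, hδpos, hδ⟩ := Metric.continuous_iff.mp hcont p (ε (φ s p)) hcpos
  have hkey : ∀ z, dist z p < δ → dist (φ s z) (φ s p) < ε (φ s z) := by
    intro z hz
    have h := hδ z hz
    rw [Real.dist_eq, abs_lt] at h
    have h1 := h.1
    simp only [dist_self, sub_zero] at h1
    linarith
  set ε' : X → ℝ := fun y => min (ε y) δ with hε'def
  have hε'c : Continuous ε' := hεc.min continuous_const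
  have hε'pos : ∀ y, 0 < ε' y := fun y => lt_min (hεpos y) hδpos
  obtain ⟨n, x, t, hn, hx0, hxn, ht, hchain⟩ := hrec ε' hε'c hε'pos T hT
  refine ⟨n, fun i => if i = n then φ s p else x i,
    fun i => if i = n - 1 then t i + s else t i, hn, ?_, ?_, ?_, ?_⟩
  · have : (0 : ℕ) ≠ n := by omega
    simp [this, hx0]
  · simp
  · intro i hi
    by_cases h : i = n - 1
    · beta_reduce; rw [if_pos h]; linarith [ht i hi]
    · beta_reduce; rw [if_neg h]; exact ht i hi
  · intro i hi
    have hin : i ≠ n := by omega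
    by_cases h : i = n - 1
    · have hi1 : i + 1 = n := by omega
      have hz : dist (φ (t i) (x i)) p < δ := by
        have := hchain i hi
        rw [hi1, hxn] at this
        exact lt_of_lt_of_le this (min_le_right _ _)
      have hmain := hkey _ hz
      beta_reduce
      rw [if_pos h, if_neg hin, if_pos hi1, add_comm (t i) s, hφadd]
      exact hmain
    · have hi1 : i + 1 ≠ n := by omega
      beta_reduce
      simp only [if_neg h, if_neg hin, if_neg hi1]
      exact lt_of_lt_of_le (hchain i hi) (min_le_left _ _)
end

section
/- Deterministic version of Lemma 3.3: Let φ be a flow on a metric space X and U an open 'pre-attractor', i.e. there is τ > 0 with Cl(⋃_{t ≥ τ} φ(t,U)) ⊆ U, and assume U is forward invariant (φ(t,U) ⊆ U for all t ≥ 0). Define the attractor A = ⋂_{n ∈ ℕ} Cl(⋃_{t ≥ nτ} φ(t,U)). If p ∈ U is chain recurrent for φ, then p ∈ A. -/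
open Metric Set

theorem chain_recurrent_in_preattractor_mem_attractor
    {X : Type*} [MetricSpace X] (φ : ℝ → X → X)
    (hφ0 : ∀ x, φ 0 x = x)
    (hφadd : ∀ t s x, φ (t + s) x = φ t (φ s x))
    (hφcont : Continuous fun q : ℝ × X => φ q.1 q.2)
    (U : Set X) (hUopen : IsOpen U)
    (hfwd : ∀ t : ℝ, 0 ≤ t → φ t '' U ⊆ U)
    (τ : ℝ) (hτ : 0 < τ)
    (hpre : closure (⋃ (t : ℝ) (_ : τ ≤ t), φ t '' U) ⊆ U)
    (p : X) (hpU : p ∈ U)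
    (hrec : ∀ ε : X → ℝ, Continuous ε → (∀ x, 0 < ε x) →
      ∀ T : ℝ, 0 < T → EpsChain φ ε T p p) :
    p ∈ ⋂ n : ℕ, closure (⋃ (t : ℝ) (_ : (n : ℝ) * τ ≤ t), φ t '' U) := by
  set K : Set X := closure (⋃ (t : ℝ) (_ : τ ≤ t), φ t '' U) with hKdef
  have hKU : K ⊆ U := hpre
  have hKclosed : IsClosed K := isClosed_closure
  have hKne : K.Nonempty :=
    ⟨φ τ p, subset_closure (mem_iUnion.2 ⟨τ, mem_iUnion.2 ⟨le_refl τ, ⟨p, hpU, rfl⟩⟩⟩)⟩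
  have key : ∀ n : ℕ, 1 ≤ n → ∀ ε₀ : ℝ, 0 < ε₀ →
      ∃ y ∈ ⋃ (t : ℝ) (_ : (n : ℝ) * τ ≤ t), φ t '' U, dist p y < ε₀ := by
    intro n hn ε₀ hε₀
    have hn' : (1 : ℝ) ≤ (n : ℝ) := by exact_mod_cast hn
    obtain ⟨g, hgc, hgpos, hball, hle⟩ :
        ∃ g : X → ℝ, Continuous g ∧ (∀ x, 0 < g x) ∧
          (∀ y ∈ K, ∀ z, dist y z < g y → z ∈ U) ∧ (∀ y ∈ K, g y ≤ ε₀) := by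
      by_cases hC : Uᶜ = ∅
      · have hU : U = univ := by rwa [compl_empty_iff] at hC
        exact ⟨fun _ => ε₀, continuous_const, fun _ => hε₀,
          fun y _ z _ => by simp [hU], fun _ _ => le_refl _⟩
      · have hCne : (Uᶜ).Nonempty := nonempty_iff_ne_empty.2 hC
        refine ⟨fun x => min ε₀ (infDist x Uᶜ) + infDist x K, ?_, ?_, ?_, ?_⟩
        · exact ((continuous_const.min (continuous_infDist_pt _)).add
            (continuous_infDist_pt _))
        · intro x
          by_cases hx : x ∈ K
          · have hxU : x ∈ U := hKU hx
            have h1 : 0 < infDist x Uᶜ :=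
              (hUopen.isClosed_compl.notMem_iff_infDist_pos hCne).1 (by simpa using hxU)
            exact add_pos_of_pos_of_nonneg (lt_min hε₀ h1) infDist_nonneg
          · have h2 : 0 < infDist x K :=
              (hKclosed.notMem_iff_infDist_pos hKne).1 hx
            exact add_pos_of_nonneg_of_pos (le_min hε₀.le infDist_nonneg) h2
        · intro y hy z hz
          simp only at hz
          rw [infDist_zero_of_mem hy, add_zero] at hz
          by_contra hzU
          exact absurd hz (not_lt.2 ((min_le_right _ _).trans
            (infDist_le_dist_of_mem (x := y) hzU)))
        · intro y hy
          simp only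
          rw [infDist_zero_of_mem hy, add_zero]
          exact min_le_left _ _
    have hTpos : 0 < (n : ℝ) * τ := mul_pos (by linarith) hτ
    obtain ⟨m, x, t, hm, hx0, hxm, ht, hd⟩ := hrec g hgc hgpos ((n : ℝ) * τ) hTpos
    have hτle : ∀ i < m, τ ≤ t i := by
      intro i hi
      have := ht i hi
      nlinarith
    have hmemK : ∀ i < m, x i ∈ U → φ (t i) (x i) ∈ K := fun i hi hxi =>
      subset_closure (mem_iUnion.2 ⟨t i, mem_iUnion.2 ⟨hτle i hi, ⟨x i, hxi, rfl⟩⟩⟩)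
    have hxU : ∀ i, i ≤ m → x i ∈ U := by
      intro i
      induction i with
      | zero => intro _; rw [hx0]; exact hpU
      | succ j ih =>
        intro hj
        have hjm : j < m := lt_of_lt_of_le (Nat.lt_succ_self j) hj
        exact hball _ (hmemK j hjm (ih hjm.le)) _ (hd j hjm)
    have hmpos : 0 < m := lt_of_lt_of_le one_pos hm
    have hi : m - 1 < m := Nat.sub_lt hmpos one_pos
    have hyK : φ (t (m - 1)) (x (m - 1)) ∈ K := hmemK _ hi (hxU _ hi.le)
    have hsucc : m - 1 + 1 = m := Nat.succ_pred_eq_of_pos hmpos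
    have hdist : dist (φ (t (m - 1)) (x (m - 1))) p < ε₀ := by
      have h := hd (m - 1) hi
      rw [hsucc, hxm] at h
      exact lt_of_lt_of_le h (hle _ hyK)
    exact ⟨φ (t (m - 1)) (x (m - 1)),
      mem_iUnion.2 ⟨t (m - 1), mem_iUnion.2 ⟨ht _ hi, ⟨x (m - 1), hxU _ hi.le, rfl⟩⟩⟩,
      by rwa [dist_comm]⟩
  rw [Set.mem_iInter]
  intro n
  rcases Nat.eq_zero_or_pos n with hn | hn
  · subst hn
    exact subset_closure (mem_iUnion.2 ⟨0, mem_iUnion.2 ⟨by simp, ⟨p, hpU, hφ0 p⟩⟩⟩)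
  · rw [Metric.mem_closure_iff]
    intro ε hε
    exact key n hn ε hε
end

section
/- Deterministic version of Lemma 3.4: Let φ be a flow on metric space X, U an open forward-invariant pre-attractor (Cl(⋃_{t≥τ}φ(t,U)) ⊆ U for some τ > 0) with attractor A = ⋂_n Cl(⋃_{t≥nτ} φ(t,U)), and basin B(A,U) = {x : φ(t,x) ∈ U for some t ≥ 0}. If p ∈ B(A,U) is chain recurrent, then p ∈ A. -/
theorem chain_recurrent_in_basin_mem_attractor
    {X : Type*} [MetricSpace X] (φ : ℝ → X → X)
    (hφ0 : ∀ x, φ 0 x = x)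
    (hφadd : ∀ t s x, φ (t + s) x = φ t (φ s x))
    (hφcont : Continuous fun q : ℝ × X => φ q.1 q.2)
    (U : Set X) (hUopen : IsOpen U)
    (hfwd : ∀ t : ℝ, 0 ≤ t → φ t '' U ⊆ U)
    (τ : ℝ) (hτ : 0 < τ)
    (hpre : closure (⋃ (t : ℝ) (_ : τ ≤ t), φ t '' U) ⊆ U)
    (p : X) (hpB : ∃ t : ℝ, 0 ≤ t ∧ φ t p ∈ U)
    (hrec : ∀ ε : X → ℝ, Continuous ε → (∀ x, 0 < ε x) →
      ∀ T : ℝ, 0 < T → EpsChain φ ε T p p) :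
    p ∈ ⋂ n : ℕ, closure (⋃ (t : ℝ) (_ : (n : ℝ) * τ ≤ t), φ t '' U) := by
  obtain ⟨t0, ht0, hpU⟩ := hpB
  have hnτ : ∀ n : ℕ, (0:ℝ) ≤ (n:ℝ) * τ := fun n =>
    mul_nonneg (Nat.cast_nonneg n) hτ.le
  simp only [Set.mem_iInter]
  intro n
  by_cases hUuniv : U = Set.univ
  · subst hUuniv
    apply subset_closure
    refine Set.mem_iUnion.2 ⟨(n:ℝ)*τ, Set.mem_iUnion.2 ⟨le_refl _, ?_⟩⟩
    refine ⟨φ (-((n:ℝ)*τ)) p, Set.mem_univ _, ?_⟩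
    rw [← hφadd]
    simp [hφ0]
  have hUc : (Uᶜ : Set X).Nonempty := by
    rw [Set.nonempty_compl]; exact hUuniv
  set S1 : Set X := ⋃ (t : ℝ) (_ : τ ≤ t), φ t '' U with hS1
  set C := closure S1 with hC
  have hCU : C ⊆ U := hpre
  have hS1C : S1 ⊆ C := subset_closure
  have hmemS1 : ∀ s : ℝ, τ ≤ s → ∀ y ∈ U, φ s y ∈ S1 := by
    intro s hs y hy
    exact Set.mem_iUnion.2 ⟨s, Set.mem_iUnion.2 ⟨hs, ⟨y, hy, rfl⟩⟩⟩
  have hCne : C.Nonempty := ⟨φ τ (φ t0 p), hS1C (hmemS1 τ le_rfl _ hpU)⟩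
  rw [Metric.mem_closure_iff]
  intro δ hδ
  set ε : X → ℝ := fun x => min δ (Metric.infDist x Uᶜ + Metric.infDist x C) with hε
  have hεcont : Continuous ε :=
    continuous_const.min ((Metric.continuous_infDist_pt _).add
      (Metric.continuous_infDist_pt _))
  have hεpos : ∀ x, 0 < ε x := by
    intro x
    refine lt_min hδ ?_
    rcases em (x ∈ U) with hx | hx
    · have h1 : 0 < Metric.infDist x Uᶜ := by
        rw [← (isClosed_compl_iff.2 hUopen).notMem_iff_infDist_pos hUc]
        simpa using hx
      have h2 := Metric.infDist_nonneg (s := C) (x := x)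
      linarith
    · have h1 : 0 < Metric.infDist x C := by
        rw [← isClosed_closure.notMem_iff_infDist_pos hCne]
        exact fun h => hx (hCU h)
      have h2 := Metric.infDist_nonneg (s := Uᶜ) (x := x)
      linarith
  set T : ℝ := t0 + (n:ℝ)*τ + τ + 1 with hTdef
  have hT : 0 < T := by
    have := hnτ n
    simp only [hTdef]; linarith
  obtain ⟨m, x, t, hm, hx0, hxm, hts, hjump⟩ := hrec ε hεcont hεpos T hT
  have hballU : ∀ z ∈ C, ∀ y, dist z y < ε z → y ∈ U := by
    intro z hz y hy
    by_contra hyU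
    have h1 : Metric.infDist z C = 0 := Metric.infDist_zero_of_mem hz
    have h2 : ε z ≤ Metric.infDist z Uᶜ := by
      calc ε z ≤ Metric.infDist z Uᶜ + Metric.infDist z C := min_le_right _ _
        _ = Metric.infDist z Uᶜ := by rw [h1, add_zero]
    have h3 : Metric.infDist z Uᶜ ≤ dist z y :=
      Metric.infDist_le_dist_of_mem (Set.mem_compl hyU)
    linarith
  have key : ∀ i, i < m →
      φ (t i) (x i) ∈ (⋃ (s:ℝ) (_ : (n:ℝ)*τ ≤ s), φ s '' U) ∧
      φ (t i) (x i) ∈ C ∧ x (i+1) ∈ U := by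
    intro i
    induction i with
    | zero =>
      intro h0
      have ht' := hts 0 h0
      have hsub : φ (t 0) (x 0) = φ (t 0 - t0) (φ t0 p) := by
        rw [← hφadd, sub_add_cancel, hx0]
      have hge : τ ≤ t 0 - t0 := by
        have := hnτ n; simp only [hTdef] at ht'; linarith
      have hgen : (n:ℝ)*τ ≤ t 0 - t0 := by
        simp only [hTdef] at ht'; linarith
      have hzC : φ (t 0) (x 0) ∈ C := by
        rw [hsub]; exact hS1C (hmemS1 _ hge _ hpU)
      refine ⟨?_, hzC, ?_⟩
      · rw [hsub]
        exact Set.mem_iUnion.2 ⟨t 0 - t0, Set.mem_iUnion.2 ⟨hgen, ⟨_, hpU, rfl⟩⟩⟩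
      · exact hballU _ hzC _ (hjump 0 h0)
    | succ j ih =>
      intro hj
      have hjm : j < m := Nat.lt_of_succ_lt hj
      have hxU : x (j+1) ∈ U := (ih hjm).2.2
      have ht' := hts (j+1) hj
      have hge : τ ≤ t (j+1) := by
        have := hnτ n; simp only [hTdef] at ht'; linarith
      have hgen : (n:ℝ)*τ ≤ t (j+1) := by
        simp only [hTdef] at ht'; linarith
      have hzC : φ (t (j+1)) (x (j+1)) ∈ C := hS1C (hmemS1 _ hge _ hxU)
      refine ⟨Set.mem_iUnion.2 ⟨t (j+1), Set.mem_iUnion.2 ⟨hgen, ⟨_, hxU, rfl⟩⟩⟩,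
        hzC, hballU _ hzC _ (hjump (j+1) hj)⟩
  have hlast : m - 1 < m := Nat.sub_lt hm one_pos
  obtain ⟨hzS, hzC, -⟩ := key (m-1) hlast
  have hjl := hjump (m-1) hlast
  have hml : m - 1 + 1 = m := Nat.succ_pred_eq_of_pos hm
  rw [hml, hxm] at hjl
  refine ⟨φ (t (m-1)) (x (m-1)), hzS, ?_⟩
  rw [dist_comm]
  exact lt_of_lt_of_le hjl (min_le_left _ _)
end

section
/- Chain-reachable set is a pre-attractor (deterministic version of the main construction): Let φ be a flow on a metric space X, x ∈ X, ε : X → (0,∞) continuous, τ > 0. Let U_x be the set of all endpoints of (ε,τ)-chains starting at x. Then U_x is open, and φ(t, U_x) ⊆ U_x for all t ≥ τ. Moreover, any point y with d(z', y) < δ(y) for some z' ∈ ⋃_{t≥τ} φ(t, U_x), where δ ≤ ε/2 is chosen so that d(y,w) < δ(y) implies ε(w) > ε(y)/2, is again in U_x; hence ⋃_{t ≥ τ} φ(t,U_x) has closure contained in U_x whenever every closure point is such a y. -/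
lemma EpsChain.extend {X : Type*} [MetricSpace X] {φ : ℝ → X → X} {ε : X → ℝ} {T : ℝ}
    {p q y : X} {t : ℝ} (h : EpsChain φ ε T p q) (ht : T ≤ t)
    (hd : dist (φ t q) y < ε (φ t q)) : EpsChain φ ε T p y := by
  obtain ⟨n, x, s, hn, h0, hq, hs, hjump⟩ := h
  refine ⟨n + 1, fun i => if i = n + 1 then y else x i, fun i => if i = n then t else s i,
    le_trans hn (Nat.le_succ n), ?_, by simp, ?_, ?_⟩
  · simp [Nat.succ_ne_zero, h0]
  · intro i hi
    rcases eq_or_lt_of_le (Nat.lt_succ_iff.mp hi) with rfl | hi'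
    · simp [ht]
    · have : i ≠ n := Nat.ne_of_lt hi'
      simp [this, hs i hi']
  · intro i hi
    rcases eq_or_lt_of_le (Nat.lt_succ_iff.mp hi) with rfl | hi'
    · simpa [hq] using hd
    · have h1 : i ≠ n := Nat.ne_of_lt hi'
      have h2 : i ≠ n + 1 := by omega
      have h3 : i + 1 ≠ n + 1 := by omega
      simpa [h1, h2, h3] using hjump i hi'

theorem chain_reachable_set_is_preattractor
    {X : Type*} [MetricSpace X] (φ : ℝ → X → X)
    (hφcont : Continuous fun q : ℝ × X => φ q.1 q.2)
    (ε : X → ℝ) (hεcont : Continuous ε) (hεpos : ∀ x, 0 < ε x)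
    (τ : ℝ) (hτ : 0 < τ) (x : X) :
    IsOpen {y : X | EpsChain φ ε τ x y} ∧
    (∀ t : ℝ, τ ≤ t → φ t '' {y : X | EpsChain φ ε τ x y} ⊆ {y : X | EpsChain φ ε τ x y}) ∧
    ∀ δ : X → ℝ, (∀ y, 0 < δ y) → (∀ y, δ y ≤ ε y / 2) →
      (∀ y w, dist y w < δ y → ε y / 2 < ε w) →
      (∀ y : X,
        (∃ z' ∈ ⋃ (t : ℝ) (_ : τ ≤ t), φ t '' {y : X | EpsChain φ ε τ x y},
          dist z' y < δ y) → y ∈ {y : X | EpsChain φ ε τ x y}) ∧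
      ((∀ y ∈ closure (⋃ (t : ℝ) (_ : τ ≤ t), φ t '' {y : X | EpsChain φ ε τ x y}),
          ∃ z' ∈ ⋃ (t : ℝ) (_ : τ ≤ t), φ t '' {y : X | EpsChain φ ε τ x y},
            dist z' y < δ y) →
        closure (⋃ (t : ℝ) (_ : τ ≤ t), φ t '' {y : X | EpsChain φ ε τ x y})
          ⊆ {y : X | EpsChain φ ε τ x y}) := by
  set U : Set X := {y : X | EpsChain φ ε τ x y} with hU
  have hflow : ∀ t : ℝ, τ ≤ t → φ t '' U ⊆ U := by
    intro t ht z hz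
    obtain ⟨y, hy, rfl⟩ := hz
    exact hy.extend ht (by simpa using hεpos _)
  refine ⟨?_, hflow, ?_⟩
  · rw [Metric.isOpen_iff]
    intro y hy
    obtain ⟨n, xs, ts, hn, h0, hq, hts, hjump⟩ := hy
    set m := n - 1 with hm
    have hmn : m + 1 = n := Nat.succ_pred_eq_of_pos hn
    set c := φ (ts m) (xs m) with hc
    have hlast : dist c y < ε c := by
      have := hjump m (by omega)
      rwa [hmn, hq] at this
    refine ⟨ε c - dist c y, by linarith, fun y' hy' => ?_⟩
    rw [Metric.mem_ball, dist_comm] at hy'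
    refine ⟨n, Function.update xs n y', ts, hn, ?_, by simp, hts, ?_⟩
    · rw [Function.update_of_ne (by omega), h0]
    · intro i hi
      rcases eq_or_lt_of_le (Nat.lt_succ_iff.mp (by omega : i < m + 1)) with rfl | hi'
      · rw [Function.update_of_ne (by omega), hmn, Function.update_self, ← hc]
        calc dist c y' ≤ dist c y + dist y y' := dist_triangle _ _ _
          _ < ε c := by linarith
      · rw [Function.update_of_ne (by omega), Function.update_of_ne (by omega)]
        exact hjump i (by omega)
  · intro δ hδpos hδle hδε
    have hmain : ∀ y : X,
        (∃ z' ∈ ⋃ (t : ℝ) (_ : τ ≤ t), φ t '' U, dist z' y < δ y) → y ∈ U := by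
      rintro y ⟨z', hz', hdzy⟩
      simp only [Set.mem_iUnion] at hz'
      obtain ⟨t, ht, z, hz, rfl⟩ := hz'
      have h1 : dist y (φ t z) < δ y := by rwa [dist_comm] at hdzy
      have h2 : ε y / 2 < ε (φ t z) := hδε y (φ t z) h1
      have : dist (φ t z) y < ε (φ t z) := by
        have := hδle y
        linarith [hdzy]
      exact hz.extend ht this
    exact ⟨hmain, fun hcl y hy => hmain y (hcl y hy)⟩
end
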